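/- Let p ≥ 0 be a real number and let F : Γ → ℂ satisfy ∑_{σ ∈ Γ} λ_σ^{-2p} |F(σ)|² < ∞. Define u_k = 𝔈_{k-1}(𝔞_k F) for k ∈ ℕ (with 𝔈_{-1} = 𝔈). Then (i) the sequence (u_k) is predictable, i.e. 𝔈_{k-1} u_k = u_k for every k ∈ ℕ; and (ii) the partial sums ∑_{k=0}^{n} 𝔞_k† u_k converge to F − 𝔈F in the ‖·‖_{-p} norm, i.e. ∑_{σ ∈ Γ} λ_σ^{-2p} |∑_{k=0}^{n} (𝔞_k† u_k)(σ) − (F(σ) − (𝔈F)(σ))|² → 0 as n → ∞. (Thus every generalized functional is the sum of its expectation and the generalized stochastic integral of a predictable generalized process.) -/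

import Mathlib

open scoped BigOperators

/-- `λ_σ = ∏_{k ∈ σ} (k+1)`, with `λ_∅ = 1`. -/
noncomputable def lam (σ : Finset ℕ) : ℝ := ∏ k ∈ σ, ((k : ℝ) + 1)

/-- The annihilation operator: `(𝔞_k F)(σ) = F(σ ∪ {k})` if `k ∉ σ`, else `0`. -/
def ann (k : ℕ) (F : Finset ℕ → ℂ) : Finset ℕ → ℂ :=
  fun σ => if k ∈ σ then 0 else F (insert k σ)

/-- The creation operator: `(𝔞_k† F)(σ) = F(σ \ {k})` if `k ∈ σ`, else `0`. -/
def cre (k : ℕ) (F : Finset ℕ → ℂ) : Finset ℕ → ℂ :=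
  fun σ => if k ∈ σ then F (σ.erase k) else 0

/-- The conditional expectation operator:
`(𝔈_k F)(σ) = F(σ)` if every `j ∈ σ` satisfies `j ≤ k`, else `0`. -/
def cexp (k : ℕ) (F : Finset ℕ → ℂ) : Finset ℕ → ℂ :=
  fun σ => if ∀ j ∈ σ, j ≤ k then F σ else 0

/-- The expectation operator: `(𝔈 F)(σ) = F(∅)` if `σ = ∅`, else `0`. -/
def expec (F : Finset ℕ → ℂ) : Finset ℕ → ℂ :=
  fun σ => if σ = ∅ then F ∅ else 0

/-- `𝔈_{k-1}` with the convention `𝔈_{-1} = 𝔈`: `cexpm k = 𝔈_{k-1}`. -/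
def cexpm : ℕ → (Finset ℕ → ℂ) → Finset ℕ → ℂ
  | 0 => expec
  | k + 1 => cexp k

lemma creA (F : Finset ℕ → ℂ) (k : ℕ) (σ : Finset ℕ) :
    cre k (cexpm k (ann k F)) σ = if k ∈ σ ∧ ∀ j ∈ σ, j ≤ k then F σ else 0 := by
  classical
  cases k with
  | zero =>
    simp only [cexpm, cre, expec, ann]
    by_cases h0 : 0 ∈ σ
    · simp only [h0, if_true, true_and]
      by_cases he : σ.erase 0 = ∅
      · have hσ : σ = {0} := by
          rcases (Finset.erase_eq_empty_iff σ 0).mp he with h | h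
          · exact absurd (h ▸ h0) (by simp)
          · exact h
        subst hσ
        simp
      · obtain ⟨j, hj⟩ := Finset.nonempty_iff_ne_empty.mpr he
        have hj0 : j ≠ 0 := Finset.ne_of_mem_erase hj
        have hjσ : j ∈ σ := Finset.mem_of_mem_erase hj
        rw [if_neg he, if_neg]
        intro h
        exact hj0 (Nat.le_zero.mp (h j hjσ))
    · simp [h0]
  | succ k =>
    simp only [cexpm, cre, cexp, ann]
    by_cases h : k + 1 ∈ σ
    · have hiff : (∀ j ∈ σ.erase (k + 1), j ≤ k) ↔ (∀ j ∈ σ, j ≤ k + 1) := by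
        constructor
        · intro H j hj
          by_cases hjk : j = k + 1
          · omega
          · exact Nat.le_succ_of_le (H j (Finset.mem_erase.mpr ⟨hjk, hj⟩))
        · intro H j hj
          have := H j (Finset.mem_of_mem_erase hj)
          have := Finset.ne_of_mem_erase hj
          omega
      rw [if_pos h, if_neg (Finset.notMem_erase (k + 1) σ), Finset.insert_erase h]
      simp only [h, true_and]
      exact if_congr hiff rfl rfl
    · simp [h]

lemma sumA (F : Finset ℕ → ℂ) (n : ℕ) (σ : Finset ℕ) :
    ∑ k ∈ Finset.range (n + 1), cre k (cexpm k (ann k F)) σ =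
      if σ ⊆ Finset.range (n + 1) ∧ σ ≠ ∅ then F σ else 0 := by
  classical
  simp only [creA]
  rcases σ.eq_empty_or_nonempty with rfl | hne
  · simp
  · have hmem := σ.max'_mem hne
    set m := σ.max' hne with hm
    have hcond : ∀ k : ℕ, (k ∈ σ ∧ ∀ j ∈ σ, j ≤ k) ↔ k = m := by
      intro k
      constructor
      · rintro ⟨hk, hall⟩
        exact le_antisymm (Finset.le_max' σ k hk) (hall m hmem)
      · rintro rfl
        exact ⟨hmem, fun j hj => Finset.le_max' σ j hj⟩
    simp only [hcond]
    rw [Finset.sum_ite_eq' (Finset.range (n + 1)) m fun _ => F σ]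
    have hsub : m ∈ Finset.range (n + 1) ↔ (σ ⊆ Finset.range (n + 1) ∧ σ ≠ ∅) := by
      constructor
      · intro hmr
        refine ⟨fun j hj => ?_, Finset.nonempty_iff_ne_empty.mp hne⟩
        have := Finset.le_max' σ j hj
        simp only [Finset.mem_range] at hmr ⊢
        omega
      · rintro ⟨hs, -⟩
        exact hs hmem
    by_cases hc : m ∈ Finset.range (n + 1)
    · rw [if_pos hc, if_pos (hsub.mp hc)]
    · rw [if_neg hc, if_neg (fun h => hc (hsub.mpr h))]

/-- With `u_k = 𝔈_{k-1} 𝔞_k F`, the sequence `(u_k)` is `(𝔈_k)`-predictable and the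
partial sums of the generalized stochastic integral `∑_k 𝔞_k† u_k` converge to
`F − 𝔈F` in the `‖·‖_{-p}` norm. -/
theorem stmt15 (p : ℝ) (hp : 0 ≤ p) (F : Finset ℕ → ℂ)
    (hF : Summable (fun σ : Finset ℕ => lam σ ^ (-(2 * p)) * ‖F σ‖ ^ 2)) :
    (∀ k : ℕ, ∀ σ : Finset ℕ,
      cexpm k (cexpm k (ann k F)) σ = cexpm k (ann k F) σ) ∧
    Filter.Tendsto
      (fun n : ℕ => ∑' σ : Finset ℕ, lam σ ^ (-(2 * p)) *
        ‖(∑ k ∈ Finset.range (n + 1), cre k (cexpm k (ann k F)) σ) -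
          (F σ - expec F σ)‖ ^ 2)
      Filter.atTop (nhds 0) := by
  classical
  constructor
  · intro k σ
    cases k with
    | zero =>
      simp only [cexpm, expec]
      split_ifs with h
      · subst h; simp
      · rfl
    | succ k =>
      simp only [cexpm, cexp]
      split_ifs with h
      · rfl
      · rfl
  · set g : Finset ℕ → ℝ := fun σ => lam σ ^ (-(2 * p)) * ‖F σ‖ ^ 2 with hg
    -- pointwise identification of each term
    have hterm : ∀ n σ, lam σ ^ (-(2 * p)) *
        ‖(∑ k ∈ Finset.range (n + 1), cre k (cexpm k (ann k F)) σ) -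
          (F σ - expec F σ)‖ ^ 2 =
        if σ ⊆ Finset.range (n + 1) then 0 else g σ := by
      intro n σ
      rw [sumA]
      rcases eq_or_ne σ ∅ with rfl | hne
      · simp [expec, g]
      · have hexp : expec F σ = 0 := by simp [expec, hne]
        rw [hexp]
        by_cases hs : σ ⊆ Finset.range (n + 1)
        · simp [hs, hne]
        · simp only [hs, hne, false_and, if_false, if_neg hs]
          rw [zero_sub, sub_zero, norm_neg]
    -- rewrite each tsum as a sum over the complement of a finite set of finsets
    have hrw : ∀ n : ℕ, (∑' σ : Finset ℕ, lam σ ^ (-(2 * p)) *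
        ‖(∑ k ∈ Finset.range (n + 1), cre k (cexpm k (ann k F)) σ) -
          (F σ - expec F σ)‖ ^ 2) =
        ∑' σ : { x // x ∉ (Finset.range (n + 1)).powerset }, g σ := by
      intro n
      refine Eq.trans (tsum_congr fun σ => ?_)
        (tsum_subtype {x : Finset ℕ | x ∉ (Finset.range (n + 1)).powerset} g).symm
      rw [hterm n σ]
      by_cases hs : σ ⊆ Finset.range (n + 1)
      · have : σ ∈ (Finset.range (n + 1)).powerset := Finset.mem_powerset.mpr hs
        simp [Set.indicator, this, hs]
      · have : σ ∉ (Finset.range (n + 1)).powerset := fun h => hs (Finset.mem_powerset.mp h)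
        simp [Set.indicator, this, hs]
    simp only [hrw]
    have hT : Filter.Tendsto (fun n : ℕ => (Finset.range (n + 1)).powerset)
        Filter.atTop Filter.atTop := by
      apply Filter.tendsto_atTop_finset_of_monotone
      · intro a b hab
        exact Finset.powerset_mono.mpr (Finset.range_subset_range.mpr (by omega))
      · intro σ
        refine ⟨σ.sup id, Finset.mem_powerset.mpr fun j hj => ?_⟩
        have : j ≤ σ.sup id := Finset.le_sup (f := id) hj
        simp only [Finset.mem_range]
        omega
    exact (tendsto_tsum_compl_atTop_zero g).comp hT
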